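/- arXiv:2211.04458 — 3 statements merged into one kernel-verified Lean document; each statement's English description precedes it below -/
import Mathlib

section
/- Let G be a graph and q ≥ 1 an integer. Let U be the set of vertices u of G with |N_{G²}[u]| > q (closed neighborhood in the square graph), and let W = U ∪ N_G(U). Then G has a proper q-coloring of its square G² if and only if the induced subgraph G[W] has a proper q-coloring of its square (G[W])². -/
open SimpleGraph

/-- The square of a graph: vertices adjacent iff at distance at most 2,
i.e. adjacent or sharing a common neighbor. -/
def squareGraph {V : Type*} (G : SimpleGraph V) : SimpleGraph V where
  Adj u v := u ≠ v ∧ (G.Adj u v ∨ ∃ w, G.Adj u w ∧ G.Adj w v)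
  symm := ⟨by
    rintro u v ⟨h1, h2⟩
    refine ⟨h1.symm, ?_⟩
    rcases h2 with h | ⟨w, hw1, hw2⟩
    · exact Or.inl h.symm
    · exact Or.inr ⟨w, hw2.symm, hw1.symm⟩⟩
  loopless := ⟨fun v h => h.1 rfl⟩

/-- Greedy extension lemma: if a partial proper coloring on `S` exists and every vertex
outside `S` has closed neighborhood of size at most `q`, then `H` is `q`-colorable. -/
lemma greedy_extend {V : Type*} [Fintype V] (H : SimpleGraph V) (q : ℕ) :
    ∀ n (S : Set V), Sᶜ.ncard = n →
    (∀ v ∉ S, (H.neighborSet v ∪ {v}).ncard ≤ q) →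
    (∃ c : V → Fin q, ∀ u ∈ S, ∀ v ∈ S, H.Adj u v → c u ≠ c v) →
    H.Colorable q := by
  intro n
  induction n with
  | zero =>
    rintro S hS hdeg ⟨c, hc⟩
    have hSc : Sᶜ = ∅ := (Set.ncard_eq_zero (Set.toFinite _)).mp hS
    have hSu : S = Set.univ := by
      rw [← Set.compl_empty, ← hSc, compl_compl]
    exact ⟨SimpleGraph.Coloring.mk c fun {u v} h =>
      hc u (hSu ▸ Set.mem_univ u) v (hSu ▸ Set.mem_univ v) h⟩
  | succ n ih =>
    rintro S hS hdeg ⟨c, hc⟩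
    have hne : Sᶜ.Nonempty := by
      rw [Set.nonempty_iff_ne_empty]
      intro h
      rw [h, Set.ncard_empty] at hS
      omega
    obtain ⟨v, hv⟩ := hne
    have hvS : v ∉ S := hv
    have hvN : v ∉ H.neighborSet v := by simp
    have hcard : (H.neighborSet v).ncard + 1 ≤ q := by
      have := hdeg v hvS
      rwa [Set.union_singleton, Set.ncard_insert_of_notMem hvN (Set.toFinite _)] at this
    have himg : (c '' H.neighborSet v) ≠ Set.univ := by
      intro h
      have h1 : (c '' H.neighborSet v).ncard ≤ (H.neighborSet v).ncard :=
        Set.ncard_image_le (Set.toFinite _)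
      rw [h, Set.ncard_univ, Nat.card_eq_fintype_card, Fintype.card_fin] at h1
      omega
    classical
    obtain ⟨a, ha⟩ : ∃ a, a ∉ c '' H.neighborSet v := by
      by_contra h
      push_neg at h
      exact himg (Set.eq_univ_of_forall h)
    set c' := Function.update c v a with hc'
    apply ih (insert v S)
    · have he : (insert v S)ᶜ = Sᶜ \ {v} := by
        ext x; simp [not_or, and_comm]
      rw [he, Set.ncard_diff_singleton_of_mem hv, hS]
      omega
    · intro u hu
      exact hdeg u fun h => hu (Set.mem_insert_of_mem _ h)
    · refine ⟨c', ?_⟩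
      intro x hx y hy hadj
      rcases eq_or_ne x v with hxv | hxv
      · subst hxv
        have hyv : y ≠ x := fun h => H.loopless.irrefl x (h ▸ hadj)
        rw [hc', Function.update_self, Function.update_of_ne hyv]
        intro h
        exact ha ⟨y, hadj, h.symm⟩
      · rw [hc', Function.update_of_ne hxv]
        rcases eq_or_ne y v with rfl | hyv
        · rw [Function.update_self]
          intro h
          exact ha ⟨x, hadj.symm, h⟩
        · rw [Function.update_of_ne hyv]
          exact hc x (hx.resolve_left hxv) y (hy.resolve_left hyv) hadj

/-- Let `U` be the set of vertices whose closed neighborhood in the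
square graph has more than `q` elements, and `W = U ∪ N_G(U)`.  Then `G` has a square
`q`-coloring iff the induced subgraph `G[W]` has one. -/
theorem square_coloring_irreducible {V : Type*} [Fintype V] (G : SimpleGraph V)
    (q : ℕ) (hq : 1 ≤ q)
    (U : Set V) (hU : U = {u : V | q < ((squareGraph G).neighborSet u ∪ {u}).ncard})
    (W : Set V) (hW : W = U ∪ {v : V | ∃ u ∈ U, G.Adj u v}) :
    (squareGraph G).Colorable q ↔ (squareGraph (G.induce W)).Colorable q := by
  constructor
  · rintro ⟨C⟩
    refine ⟨SimpleGraph.Coloring.mk (fun w => C w.1) ?_⟩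
    rintro ⟨u, hu⟩ ⟨x, hx⟩ (⟨hne, hadj⟩ : _ ∧ _)
    apply C.valid
    refine ⟨fun h => hne (Subtype.ext h), ?_⟩
    rcases hadj with h | ⟨⟨w, hw⟩, h1, h2⟩
    · exact Or.inl h
    · exact Or.inr ⟨w, h1, h2⟩
  · rintro ⟨C⟩
    haveI : Nonempty (Fin q) := ⟨⟨0, hq⟩⟩
    apply greedy_extend (squareGraph G) q (Uᶜ.ncard) U rfl
    · intro v hvU
      rw [hU] at hvU
      simp only [Set.mem_setOf_eq, not_lt] at hvU
      exact hvU
    · classical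
      have hUW : U ⊆ W := by rw [hW]; exact Set.subset_union_left
      refine ⟨fun v => if h : v ∈ W then C ⟨v, h⟩ else Classical.arbitrary _, ?_⟩
      intro u hu v hv hadj
      simp only [dif_pos (hUW hu), dif_pos (hUW hv)]
      apply C.valid
      obtain ⟨hne, hadj⟩ : _ ∧ _ := hadj
      refine ⟨fun h => hne (congrArg Subtype.val h), ?_⟩
      rcases hadj with h | ⟨w, h1, h2⟩
      · exact Or.inl h
      · have hwW : w ∈ W := by
          rw [hW]
          exact Or.inr ⟨u, hu, h1⟩
        exact Or.inr ⟨⟨w, hwW⟩, h1, h2⟩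
end

section
/- Let G be a graph with tree decomposition (T, β'), and let C' ⊆ V(G). Define β(t) = (⋃_{w ∈ β'(t) ∩ C'} N_G[w]) ∩ C for a set C with N_G[C] ⊆ C'. Then (T, β) is a tree decomposition of G²[C], the subgraph of the square of G induced on C. Moreover, if (T, β') has width at most w and G has maximum degree Δ, then every bag β(t) has size at most (Δ+1)(w+1). -/
open SimpleGraph

private lemma reach_in_sub {ι : Type*} (T : SimpleGraph ι) {B A : Set ι} (hBA : B ⊆ A)
    (hB : (T.induce B).Connected) {x y : ι} (hx : x ∈ B) (hy : y ∈ B) :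
    (T.induce A).Reachable ⟨x, hBA hx⟩ ⟨y, hBA hy⟩ :=
  (hB.preconnected ⟨x, hx⟩ ⟨y, hy⟩).map (T.induceHomOfLE hBA).toHom

private lemma ncard_biUnion_le {α β : Type*} {s : Set α} (hs : s.Finite) (f : α → Set β)
    (n : ℕ) (hf : ∀ a, (f a).ncard ≤ n) (hfin : ∀ a, (f a).Finite) :
    (⋃ a ∈ s, f a).ncard ≤ s.ncard * n := by
  refine Set.Finite.induction_on
    (motive := fun s _ => (⋃ a ∈ s, f a).ncard ≤ s.ncard * n) s hs (by simp) ?_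
  intro a s ha hs ih
  have : (⋃ x ∈ insert a s, f x) = f a ∪ ⋃ x ∈ s, f x := by
    simp [Set.biUnion_insert]
  rw [this, Set.ncard_insert_of_notMem ha hs]
  calc (f a ∪ ⋃ x ∈ s, f x).ncard ≤ (f a).ncard + (⋃ x ∈ s, f x).ncard :=
        Set.ncard_union_le _ _
    _ ≤ n + s.ncard * n := Nat.add_le_add (hf a) ih
    _ = (s.ncard + 1) * n := by ring

/-- From a tree decomposition `(T, β')` of `G` and sets `C, C'` with
`N_G[C] ⊆ C'`, the bags `β t = (⋃_{w ∈ β'(t) ∩ C'} N_G[w]) ∩ C` form a tree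
decomposition of `G²[C]`, and if `(T, β')` has width at most `k` and `G` has maximum
degree `Δ`, every new bag has size at most `(Δ+1)(k+1)`. -/
theorem tree_decomposition_of_square {V ι : Type*} [Fintype V]
    (G : SimpleGraph V) (T : SimpleGraph ι) (hT : T.IsTree)
    (β' : ι → Set V)
    (hcover : ∀ v : V, ∃ t, v ∈ β' t)
    (hedge : ∀ u v : V, G.Adj u v → ∃ t, u ∈ β' t ∧ v ∈ β' t)
    (hconn : ∀ v : V, (T.induce {t | v ∈ β' t}).Connected)
    (C C' : Set V)
    (hCC' : ∀ v ∈ C, ∀ w : V, (w = v ∨ G.Adj v w) → w ∈ C')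
    (β : ι → Set V)
    (hβ : ∀ t, β t = {v ∈ C | ∃ w ∈ β' t, w ∈ C' ∧ (w = v ∨ G.Adj w v)})
    (Δ k : ℕ)
    (hdeg : ∀ v : V, (G.neighborSet v).ncard ≤ Δ)
    (hwidth : ∀ t, (β' t).ncard ≤ k + 1) :
    (∀ v ∈ C, ∃ t, v ∈ β t) ∧
    (∀ u v : V, u ∈ C → v ∈ C → (squareGraph G).Adj u v → ∃ t, u ∈ β t ∧ v ∈ β t) ∧
    (∀ v ∈ C, (T.induce {t | v ∈ β t}).Connected) ∧
    (∀ t, (β t).ncard ≤ (Δ + 1) * (k + 1)) := by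
  refine ⟨?_, ?_, ?_, ?_⟩
  · -- cover
    intro v hv
    obtain ⟨t, ht⟩ := hcover v
    exact ⟨t, by rw [hβ]; exact ⟨hv, v, ht, hCC' v hv v (Or.inl rfl), Or.inl rfl⟩⟩
  · -- edges
    intro u v hu hv hadj
    obtain ⟨-, h | ⟨w, hw1, hw2⟩⟩ := hadj
    · obtain ⟨t, htu, htv⟩ := hedge u v h
      refine ⟨t, ?_, ?_⟩
      · rw [hβ]; exact ⟨hu, u, htu, hCC' u hu u (Or.inl rfl), Or.inl rfl⟩
      · rw [hβ]; exact ⟨hv, v, htv, hCC' v hv v (Or.inl rfl), Or.inl rfl⟩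
    · obtain ⟨t, htu, htw⟩ := hedge u w hw1
      have hwC' : w ∈ C' := hCC' u hu w (Or.inr hw1)
      refine ⟨t, ?_, ?_⟩
      · rw [hβ]; exact ⟨hu, u, htu, hCC' u hu u (Or.inl rfl), Or.inl rfl⟩
      · rw [hβ]; exact ⟨hv, w, htw, hwC', Or.inr hw2⟩
  · -- connectivity
    intro v hv
    set A : Set ι := {t | v ∈ β t} with hA
    have hvC' : v ∈ C' := hCC' v hv v (Or.inl rfl)
    have hmem : ∀ t, t ∈ A ↔ ∃ w ∈ β' t, w ∈ C' ∧ (w = v ∨ G.Adj w v) := by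
      intro t
      constructor
      · intro ht; rw [hA, Set.mem_setOf_eq, hβ] at ht; exact ht.2
      · intro hw; rw [hA, Set.mem_setOf_eq, hβ]; exact ⟨hv, hw⟩
    have hBv : {t | v ∈ β' t} ⊆ A := fun t ht =>
      (hmem t).2 ⟨v, ht, hvC', Or.inl rfl⟩
    obtain ⟨t₀, ht₀⟩ := hcover v
    have ht₀A : t₀ ∈ A := hBv ht₀
    have key : ∀ x (hx : x ∈ A), (T.induce A).Reachable ⟨x, hx⟩ ⟨t₀, ht₀A⟩ := by
      intro x hx
      obtain ⟨w, hwx, hwC', hwv⟩ := (hmem x).1 hx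
      have hBw : {t | w ∈ β' t} ⊆ A := fun t ht =>
        (hmem t).2 ⟨w, ht, hwC', hwv⟩
      obtain ⟨p, hpw, hpv⟩ : ∃ p, w ∈ β' p ∧ v ∈ β' p := by
        rcases hwv with rfl | hadj
        · exact ⟨x, hwx, hwx⟩
        · exact hedge w v hadj
      exact (reach_in_sub T hBw (hconn w) hwx hpw).trans
        (reach_in_sub T hBv (hconn v) hpv ht₀)
    haveI : Nonempty A := ⟨⟨t₀, ht₀A⟩⟩
    exact ⟨fun x y => (key x.1 x.2).trans (key y.1 y.2).symm⟩
  · -- width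
    intro t
    have hsub : β t ⊆ ⋃ w ∈ β' t, ({w} ∪ G.neighborSet w) := by
      rw [hβ]
      rintro v ⟨-, w, hwt, -, hwv⟩
      refine Set.mem_biUnion hwt ?_
      rcases hwv with rfl | hadj
      · exact Or.inl rfl
      · exact Or.inr hadj
    calc (β t).ncard ≤ (⋃ w ∈ β' t, ({w} ∪ G.neighborSet w)).ncard :=
          Set.ncard_le_ncard hsub (Set.toFinite _)
      _ ≤ (β' t).ncard * (Δ + 1) := by
          refine ncard_biUnion_le (Set.toFinite _) _ (Δ + 1) (fun a => ?_)
            (fun a => Set.toFinite _)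
          calc ({a} ∪ G.neighborSet a).ncard
              ≤ ({a} : Set V).ncard + (G.neighborSet a).ncard := Set.ncard_union_le _ _
            _ ≤ 1 + Δ := by simpa using hdeg a
            _ = Δ + 1 := Nat.add_comm _ _
      _ ≤ (k + 1) * (Δ + 1) := Nat.mul_le_mul_right _ (hwidth t)
      _ = (Δ + 1) * (k + 1) := Nat.mul_comm _ _
end

section
/- Let q ≥ 3 and let the 'subset gadget' graph Subset(α,β) (for q ≥ α ≥ β ≥ 1) consist of: input vertices V_in (α vertices) all adjacent to a vertex a; vertex a adjacent to q−α 'complement' vertices C; all vertices of C adjacent to a vertex b; and b adjacent to β output vertices V_out. Then in any proper q-coloring χ of the square of Subset(α,β) in which the α input vertices receive pairwise distinct colors and a, b are unconstrained (colorless), the output vertices receive pairwise distinct colors and χ(V_out) ⊆ χ(V_in). -/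
open SimpleGraph

/-- The subset gadget: `α` input vertices (`Sum.inl`), `q - α` complement vertices
(`Sum.inr ∘ Sum.inl`), `β` output vertices (`Sum.inr ∘ Sum.inr ∘ Sum.inl`), and two
colorless vertices `a` (index `0`) and `b` (index `1`) in the last summand.
Inputs are adjacent to `a`, complement vertices to both `a` and `b`, outputs to `b`. -/
def subsetGadget (q α β : ℕ) : SimpleGraph (Fin α ⊕ Fin (q - α) ⊕ Fin β ⊕ Fin 2) :=
  SimpleGraph.fromRel fun x y =>
    match x, y with
    | Sum.inl _, Sum.inr (Sum.inr (Sum.inr j)) => j = 0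
    | Sum.inr (Sum.inl _), Sum.inr (Sum.inr (Sum.inr _)) => True
    | Sum.inr (Sum.inr (Sum.inl _)), Sum.inr (Sum.inr (Sum.inr j)) => j = 1
    | _, _ => False

/-- The colored (non-colorless) vertices of the subset gadget. -/
def isColoredVtx {q α β : ℕ} : (Fin α ⊕ Fin (q - α) ⊕ Fin β ⊕ Fin 2) → Prop
  | Sum.inr (Sum.inr (Sum.inr _)) => False
  | _ => True

/-- In any `q`-coloring of the colored vertices of the subset gadget
that is proper on its square (the colorless vertices `a, b` are unconstrained), if the
input vertices receive pairwise distinct colors, then the output vertices receive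
pairwise distinct colors, all taken from the set of input colors. -/
theorem subset_gadget_correct (q α β : ℕ) (hq : 3 ≤ q) (hαq : α ≤ q) (hβα : β ≤ α)
    (hβ : 1 ≤ β)
    (χ : (Fin α ⊕ Fin (q - α) ⊕ Fin β ⊕ Fin 2) → Fin q)
    (hproper : ∀ x y, isColoredVtx x → isColoredVtx y →
      (squareGraph (subsetGadget q α β)).Adj x y → χ x ≠ χ y)
    (hin : ∀ i j : Fin α, i ≠ j → χ (Sum.inl i) ≠ χ (Sum.inl j)) :
    (∀ i j : Fin β, i ≠ j →
        χ (Sum.inr (Sum.inr (Sum.inl i))) ≠ χ (Sum.inr (Sum.inr (Sum.inl j)))) ∧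
    (∀ i : Fin β, ∃ i' : Fin α,
        χ (Sum.inr (Sum.inr (Sum.inl i))) = χ (Sum.inl i')) := by

  classical
  set G := subsetGadget q α β with hG
  set a : Fin α ⊕ Fin (q - α) ⊕ Fin β ⊕ Fin 2 := Sum.inr (Sum.inr (Sum.inr 0)) with ha
  set b : Fin α ⊕ Fin (q - α) ⊕ Fin β ⊕ Fin 2 := Sum.inr (Sum.inr (Sum.inr 1)) with hb
  have hia : ∀ i : Fin α, G.Adj (Sum.inl i) a := by
    intro i
    simp [hG, ha, subsetGadget, SimpleGraph.fromRel_adj]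
  have hca : ∀ c : Fin (q - α), G.Adj (Sum.inr (Sum.inl c)) a := by
    intro c
    simp [hG, ha, subsetGadget, SimpleGraph.fromRel_adj]
  have hcb : ∀ c : Fin (q - α), G.Adj (Sum.inr (Sum.inl c)) b := by
    intro c
    simp [hG, hb, subsetGadget, SimpleGraph.fromRel_adj]
  have hob : ∀ o : Fin β, G.Adj (Sum.inr (Sum.inr (Sum.inl o))) b := by
    intro o
    simp [hG, hb, subsetGadget, SimpleGraph.fromRel_adj]
  -- square adjacency via common neighbor
  have sq : ∀ (x y w : Fin α ⊕ Fin (q - α) ⊕ Fin β ⊕ Fin 2), x ≠ y → G.Adj x w → G.Adj y w →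
      (squareGraph G).Adj x y := by
    intro x y w hxy h1 h2
    exact ⟨hxy, Or.inr ⟨w, h1, h2.symm⟩⟩
  -- the map from inputs ∪ complements to colors
  let f : Fin α ⊕ Fin (q - α) → Fin q :=
    fun z => match z with
    | Sum.inl i => χ (Sum.inl i)
    | Sum.inr c => χ (Sum.inr (Sum.inl c))
  have hfinj : Function.Injective f := by
    rintro (i | c) (j | d) h
    · by_contra hne
      exact hin i j (fun e => hne (by rw [e])) h
    · exact absurd h (hproper (Sum.inl i) (Sum.inr (Sum.inl d)) trivial trivial
        (sq _ _ a (by simp) (hia i) (hca d)))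
    · exact absurd h (hproper (Sum.inr (Sum.inl c)) (Sum.inl j) trivial trivial
        (sq _ _ a (by simp) (hca c) (hia j)))
    · by_contra hne
      have hcd : c ≠ d := fun e => hne (by rw [e])
      exact hproper (Sum.inr (Sum.inl c)) (Sum.inr (Sum.inl d)) trivial trivial
        (sq _ _ a (by simp [hcd]) (hca c) (hca d)) h
  have hcard : Fintype.card (Fin α ⊕ Fin (q - α)) = Fintype.card (Fin q) := by
    simp [Nat.add_sub_cancel' hαq]
  have hfsurj : Function.Surjective f :=
    ((Fintype.bijective_iff_injective_and_card f).mpr ⟨hfinj, hcard⟩).2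
  constructor
  · intro i j hij
    exact hproper (Sum.inr (Sum.inr (Sum.inl i))) (Sum.inr (Sum.inr (Sum.inl j))) trivial trivial
      (sq _ _ b (by simp [hij]) (hob i) (hob j))
  · intro i
    obtain ⟨z, hz⟩ := hfsurj (χ (Sum.inr (Sum.inr (Sum.inl i))))
    cases z with
    | inl i' => exact ⟨i', hz.symm⟩
    | inr c =>
      exact absurd hz (hproper (Sum.inr (Sum.inl c)) (Sum.inr (Sum.inr (Sum.inl i))) trivial trivial
        (sq _ _ b (by simp) (hcb c) (hob i)))
end
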